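/- Special case of Bailey's lemma: let a \in \{0,1\} and let \((\alpha_j)_{j\in\mathbb{Z}}\) be any family of rational functions of q. Define \(F_a(L,q) = \sum_{j=-\infty}^{\infty} \alpha_j(q) \binom{2L+a}{L-j}_q\) (a finite sum since the q-binomial coefficient vanishes for |j|>L+a). Then for every non-negative integer L, \(\sum_{r= 0}^{L} \frac{q^{r^2+ar}(q;q)_{2L+a}}{(q;q)_{L-r}\,(q;q)_{2r+a}} F_a(r,q) = \sum_{j=-\infty}^{\infty} \alpha_j(q)\, q^{j^2+aj} \binom{2L+a}{L-j}_q\). -/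

import Mathlib

open Finset

/-- The finite q-Pochhammer symbol `(a;q)_n`. -/
noncomputable def qPoch (a q : RatFunc ℚ) (n : ℕ) : RatFunc ℚ :=
  ∏ k ∈ Finset.range n, (1 - a * q ^ k)

/-- The q-binomial coefficient `[top choose bot]_q`, zero unless `0 ≤ bot ≤ top`. -/
noncomputable def qBinom (q : RatFunc ℚ) (top bot : ℤ) : RatFunc ℚ :=
  if 0 ≤ bot ∧ bot ≤ top then
    qPoch q q top.toNat / (qPoch q q bot.toNat * qPoch q q (top - bot).toNat)
  else 0

/-- The Legendre symbol modulo 3. -/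
def leg3 (j : ℤ) : ℤ := if j % 3 = 1 then 1 else if j % 3 = 2 then -1 else 0

/-- `1/(q;q)_k`, with the convention that it is zero for negative `k`. -/
noncomputable def invPoch (q : RatFunc ℚ) (k : ℤ) : RatFunc ℚ :=
  if 0 ≤ k then (qPoch q q k.toNat)⁻¹ else 0

/-- The generic variable `q` in the field of rational functions. -/
noncomputable def Xq : RatFunc ℚ := RatFunc.X

lemma one_sub_pow_ne (k : ℕ) : 1 - Xq ^ (k+1) ≠ 0 := by
  unfold Xq
  intro h
  have h2 : (RatFunc.X : RatFunc ℚ)^(k+1) = 1 := by linear_combination -h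
  rw [RatFunc.X, ← map_pow, ← map_one (algebraMap (Polynomial ℚ) (RatFunc ℚ))] at h2
  have h3 := IsFractionRing.injective (Polynomial ℚ) (RatFunc ℚ) h2
  have := congrArg Polynomial.natDegree h3
  simp [Polynomial.natDegree_X_pow] at this

lemma qPoch_eq (n : ℕ) : qPoch Xq Xq n = ∏ k ∈ Ico 1 (n+1), (1 - Xq^k) := by
  rw [qPoch, Finset.prod_Ico_eq_prod_range]
  simp [← pow_succ', add_comm 1]

lemma qPoch_ne (n : ℕ) : qPoch Xq Xq n ≠ 0 := by
  rw [qPoch_eq]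
  apply Finset.prod_ne_zero_iff.mpr
  intro k hk
  simp only [mem_Ico] at hk
  have hk1 : k = (k-1)+1 := by omega
  rw [hk1]
  exact one_sub_pow_ne _

lemma qPoch_succ (n : ℕ) : qPoch Xq Xq (n+1) = qPoch Xq Xq n * (1 - Xq^(n+1)) := by
  rw [qPoch, qPoch, Finset.prod_range_succ, ← pow_succ']

lemma qPoch_ratio {s t : ℕ} (h : s ≤ t) :
    qPoch Xq Xq t = qPoch Xq Xq s * ∏ k ∈ Ico (s+1) (t+1), (1 - Xq^k) := by
  rw [qPoch_eq, qPoch_eq, ← Finset.prod_Ico_consecutive _ (by omega : 1 ≤ s+1) (by omega : s+1 ≤ t+1)]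

lemma qBinom_nat (n s : ℕ) (h : s ≤ n) :
    qBinom Xq n s = qPoch Xq Xq n / (qPoch Xq Xq s * qPoch Xq Xq (n - s)) := by
  have h1 : ((n:ℤ)).toNat = n := by omega
  have h2 : ((s:ℤ)).toNat = s := by omega
  have h3 : ((n:ℤ)-(s:ℤ)).toNat = n - s := by omega
  rw [qBinom, if_pos ⟨Int.ofNat_nonneg s, by exact_mod_cast h⟩, h1, h2, h3]

lemma qBinom_neg {top bot : ℤ} (h : bot < 0 ∨ top < bot) : qBinom Xq top bot = 0 := by
  rw [qBinom, if_neg]; omega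

lemma pascal (n s : ℕ) :
    qBinom Xq (n+1) s = Xq^s * qBinom Xq n s + qBinom Xq n ((s:ℤ)-1) := by
  rw [show ((n:ℤ)+1) = ((n+1:ℕ):ℤ) by push_cast; ring]
  rcases Nat.lt_or_ge n s with hns | hns
  · -- s ≥ n+1
    rcases Nat.lt_or_ge (n+1) s with h2 | h2
    · rw [qBinom_neg (Or.inr (by exact_mod_cast h2)), qBinom_neg (Or.inr (by exact_mod_cast hns)),
        qBinom_neg (Or.inr (by omega)), mul_zero, add_zero]
    · -- s = n+1
      have hs : s = n + 1 := by omega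
      subst hs
      rw [qBinom_nat (n+1) (n+1) le_rfl, qBinom_neg (Or.inr (by exact_mod_cast hns))]
      rw [show ((n+1:ℕ):ℤ)-1 = ((n:ℕ):ℤ) by push_cast; ring, qBinom_nat n n le_rfl]
      have h0 : qPoch Xq Xq 0 = 1 := by simp [qPoch]
      simp only [Nat.sub_self, h0, mul_one]
      rw [div_self (qPoch_ne _), div_self (qPoch_ne _)]
      ring
  · rcases Nat.eq_zero_or_pos s with rfl | hs
    · rw [qBinom_nat (n+1) 0 (by omega), qBinom_nat n 0 (by omega),
        qBinom_neg (Or.inl (by norm_num))]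
      have h0 : qPoch Xq Xq 0 = 1 := by simp [qPoch]
      rw [Nat.sub_zero, Nat.sub_zero, h0, one_mul, one_mul, div_self (qPoch_ne _),
        div_self (qPoch_ne _), pow_zero]
      ring
    · -- 1 ≤ s ≤ n
      obtain ⟨s, rfl⟩ : ∃ t, s = 1 + t := ⟨s - 1, by omega⟩
      rw [qBinom_nat (n+1) (1+s) (by omega), qBinom_nat n (1+s) (by omega),
        show ((1+s:ℕ):ℤ)-1 = ((s:ℕ):ℤ) by push_cast; ring, qBinom_nat n s (by omega)]
      have e1 : n + 1 - (1+s) = n - s := by omega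
      have e2 : n - (1+s) + 1 = n - s := by omega
      have e3 : qPoch Xq Xq (n+1) = qPoch Xq Xq n * (1 - Xq^(n+1)) := qPoch_succ n
      have e4 : qPoch Xq Xq (1+s) = qPoch Xq Xq s * (1 - Xq^(s+1)) := by
        rw [add_comm 1 s]; exact qPoch_succ s
      have e5 : qPoch Xq Xq (n - s) = qPoch Xq Xq (n - (1+s)) * (1 - Xq^(n-s)) := by
        conv_lhs => rw [← e2]
        rw [qPoch_succ, e2]
      rw [e1, e3, e4, e5]
      have hX : Xq^(n+1) = Xq^(1+s) * Xq^(n-s) := by rw [← pow_add]; congr 1; omega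
      have n1 := qPoch_ne s
      have n2 := qPoch_ne (n - (1+s))
      have n3 := qPoch_ne (n - s)
      have n4 : (1 - Xq^(s+1)) ≠ 0 := one_sub_pow_ne s
      have n5 : (1 - Xq^(n-s)) ≠ 0 := by
        have : n - s = (n - s - 1) + 1 := by omega
        rw [this]; exact one_sub_pow_ne _
      field_simp
      rw [hX]
      ring
open Finset

lemma core (n : ℕ) : ∀ m : ℕ,
    ∑ s ∈ range (n+1), Xq^(s*(s+m)) * qBinom Xq n s * ∏ k ∈ Ico (s+m+1) (n+m+1), (1 - Xq^k) = 1 := by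
  induction n with
  | zero =>
    intro m
    rw [Finset.sum_range_one]
    have h0 : qPoch Xq Xq 0 = 1 := by simp [qPoch]
    rw [qBinom_nat 0 0 le_rfl]
    simp [h0]
  | succ n ih =>
    intro m
    simp only [Nat.cast_add, Nat.cast_one]
    have key : ∀ s ∈ range (n+1+1),
        Xq^(s*(s+m)) * qBinom Xq (n+1) s * ∏ k ∈ Ico (s+m+1) (n+1+m+1), (1 - Xq^k)
        = (Xq^(s*(s+m)+s) * qBinom Xq n s * ∏ k ∈ Ico (s+m+1) (n+1+m+1), (1 - Xq^k))
          + (Xq^(s*(s+m)) * qBinom Xq n ((s:ℤ)-1) * ∏ k ∈ Ico (s+m+1) (n+1+m+1), (1 - Xq^k)) := by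
      intro s _
      rw [pascal n s, pow_add]
      ring
    rw [Finset.sum_congr rfl key, Finset.sum_add_distrib]
    -- first sum: drop last (zero) term
    rw [Finset.sum_range_succ (fun s => Xq^(s*(s+m)+s) * qBinom Xq n s * ∏ k ∈ Ico (s+m+1) (n+1+m+1), (1 - Xq^k)) (n+1)]
    rw [qBinom_neg (Or.inr (by exact_mod_cast Nat.lt_succ_self n)), mul_zero, zero_mul, add_zero]
    -- second sum: shift index
    rw [Finset.sum_range_succ' (fun s => Xq^(s*(s+m)) * qBinom Xq n ((s:ℤ)-1) * ∏ k ∈ Ico (s+m+1) (n+1+m+1), (1 - Xq^k)) (n+1)]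
    norm_num
    rw [qBinom_neg (Or.inl (by norm_num)), zero_mul, add_zero]
    rw [← Finset.sum_add_distrib]
    have key2 : ∀ s ∈ range (n+1),
        (Xq^(s*(s+m)+s) * qBinom Xq n s * ∏ k ∈ Ico (s+m+1) (n+1+m+1), (1 - Xq^k))
        + (Xq^((s+1)*(s+1+m)) * qBinom Xq n s * ∏ k ∈ Ico (s+1+m+1) (n+1+m+1), (1 - Xq^k))
        = Xq^(s*(s+(m+1))) * qBinom Xq n s * ∏ k ∈ Ico (s+(m+1)+1) (n+(m+1)+1), (1 - Xq^k) := by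
      intro s hs
      simp only [mem_range] at hs
      have hsplit : ∏ k ∈ Ico (s+m+1) (n+1+m+1), (1 - Xq^k)
          = (1 - Xq^(s+m+1)) * ∏ k ∈ Ico (s+m+2) (n+1+m+1), (1 - Xq^k) := by
        rw [Finset.prod_eq_prod_Ico_succ_bot (by omega)]
      have e1 : s+1+m+1 = s+m+2 := by omega
      have e2 : s+(m+1)+1 = s+m+2 := by omega
      have e3 : n+(m+1)+1 = n+1+m+1 := by omega
      have e4 : (s+1)*(s+1+m) = (s*(s+m)+s) + (s+m+1) := by ring
      have e5 : s*(s+(m+1)) = s*(s+m)+s := by ring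
      rw [hsplit, e1, e2, e3, e4, e5, pow_add]
      ring
    rw [Finset.sum_congr rfl key2]
    exact ih (m+1)

lemma prodIco_ne (a b : ℕ) (ha : 1 ≤ a) : (∏ k ∈ Ico a b, (1 - Xq^k)) ≠ 0 := by
  apply Finset.prod_ne_zero_iff.mpr
  intro k hk
  simp only [mem_Ico] at hk
  have hk1 : k = (k-1)+1 := by omega
  rw [hk1]
  exact one_sub_pow_ne _

lemma termEq (a jn s n : ℕ) (hs : s ≤ n) :
    Xq ^ ((jn+s)^2 + a*(jn+s)) * qPoch Xq Xq (2*(jn+n)+a) *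
      (qPoch Xq Xq ((jn+n)-(jn+s)) * qPoch Xq Xq (2*(jn+s)+a))⁻¹ *
      qBinom Xq ((2*(jn+s)+a : ℕ)) ((s:ℕ):ℤ)
    = (Xq ^ (jn^2+a*jn) * qPoch Xq Xq (2*(jn+n)+a) *
        (qPoch Xq Xq n * qPoch Xq Xq (n+(2*jn+a)))⁻¹)
      * (Xq^(s*(s+(2*jn+a))) * qBinom Xq n s *
          ∏ k ∈ Ico (s+(2*jn+a)+1) (n+(2*jn+a)+1), (1 - Xq^k)) := by
  rw [qBinom_nat (2*(jn+s)+a) s (by omega), qBinom_nat n s hs,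
    show (jn+n)-(jn+s) = n - s by omega, show 2*(jn+s)+a-s = s+(2*jn+a) by omega,
    show (jn+s)^2+a*(jn+s) = (jn^2+a*jn) + s*(s+(2*jn+a)) by ring, pow_add]
  have hr : qPoch Xq Xq (n+(2*jn+a)) =
      qPoch Xq Xq (s+(2*jn+a)) * ∏ k ∈ Ico (s+(2*jn+a)+1) (n+(2*jn+a)+1), (1-Xq^k) :=
    qPoch_ratio (by omega)
  rw [hr]
  have n1 := qPoch_ne (2*(jn+n)+a)
  have n2 := qPoch_ne (n-s)
  have n3 := qPoch_ne s
  have n4 := qPoch_ne n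
  have n5 := qPoch_ne (s+(2*jn+a))
  have n6 := prodIco_ne (s+(2*jn+a)+1) (n+(2*jn+a)+1) (by omega)
  field_simp
  rw [div_eq_iff (qPoch_ne _)]

lemma perJ (a L jn : ℕ) (hj : jn ≤ L) :
    ∑ r ∈ range (L+1), Xq ^ (r^2 + a*r) * qPoch Xq Xq (2*L+a) *
      (qPoch Xq Xq (L-r) * qPoch Xq Xq (2*r+a))⁻¹ * qBinom Xq ((2*r+a : ℕ)) ((r:ℤ) - (jn:ℤ))
    = Xq ^ (jn^2 + a*jn) * qBinom Xq ((2*L+a : ℕ)) ((L:ℤ) - (jn:ℤ)) := by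
  obtain ⟨n, rfl⟩ : ∃ n, L = jn + n := ⟨L - jn, by omega⟩
  rw [show jn + n + 1 = jn + (n+1) by omega, Finset.sum_range_add]
  have h1 : ∑ r ∈ range jn, (Xq ^ (r^2 + a*r) * qPoch Xq Xq (2*(jn+n)+a) *
      (qPoch Xq Xq ((jn+n)-r) * qPoch Xq Xq (2*r+a))⁻¹ *
      qBinom Xq ((2*r+a : ℕ)) ((r:ℤ) - (jn:ℤ))) = 0 := by
    apply Finset.sum_eq_zero
    intro r hr
    simp only [mem_range] at hr
    rw [qBinom_neg (Or.inl (by omega)), mul_zero]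
  rw [h1, zero_add]
  have key : ∀ s ∈ range (n+1),
      Xq ^ ((jn+s)^2 + a*(jn+s)) * qPoch Xq Xq (2*(jn+n)+a) *
        (qPoch Xq Xq ((jn+n)-(jn+s)) * qPoch Xq Xq (2*(jn+s)+a))⁻¹ *
        qBinom Xq ((2*(jn+s)+a : ℕ)) (((jn+s : ℕ):ℤ) - (jn:ℤ))
      = (Xq ^ (jn^2+a*jn) * qPoch Xq Xq (2*(jn+n)+a) *
          (qPoch Xq Xq n * qPoch Xq Xq (n+(2*jn+a)))⁻¹)
        * (Xq^(s*(s+(2*jn+a))) * qBinom Xq n s *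
            ∏ k ∈ Ico (s+(2*jn+a)+1) (n+(2*jn+a)+1), (1 - Xq^k)) := by
    intro s hs
    simp only [mem_range] at hs
    rw [show ((jn+s : ℕ):ℤ) - (jn:ℤ) = ((s:ℕ):ℤ) by push_cast; ring]
    exact termEq a jn s n (by omega)
  rw [Finset.sum_congr rfl key, ← Finset.mul_sum, core n (2*jn+a), mul_one]
  rw [show ((jn+n : ℕ):ℤ) - (jn:ℤ) = ((n:ℕ):ℤ) by push_cast; ring,
    qBinom_nat (2*(jn+n)+a) n (by omega), show 2*(jn+n)+a-n = n+(2*jn+a) by omega,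
    div_eq_mul_inv]
  ring

lemma qBinom_symm (top bot : ℤ) : qBinom Xq top bot = qBinom Xq top (top - bot) := by
  unfold qBinom
  by_cases h : 0 ≤ bot ∧ bot ≤ top
  · rw [if_pos h, if_pos ⟨by omega, by omega⟩, show top - (top - bot) = bot by ring, mul_comm]
  · rw [if_neg h, if_neg (by omega)]

lemma perJZ (a L : ℕ) (ha : a ≤ 1) (j : ℤ) (hlo : -(L:ℤ) - a ≤ j) (hhi : j ≤ L) :
    ∑ r ∈ range (L+1), Xq ^ (r^2 + a*r) * qPoch Xq Xq (2*L+a) *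
      (qPoch Xq Xq (L-r) * qPoch Xq Xq (2*r+a))⁻¹ * qBinom Xq (2*(r:ℤ)+a) ((r:ℤ) - j)
    = Xq ^ ((j:ℤ)^2 + a*j) * qBinom Xq (2*(L:ℤ)+a) ((L:ℤ) - j) := by
  have hcast : ∀ r : ℕ, (2*(r:ℤ)+a) = ((2*r+a : ℕ) : ℤ) := by intro r; push_cast; ring
  rcases le_or_gt 0 j with hj0 | hj0
  · obtain ⟨jn, rfl⟩ : ∃ jn : ℕ, j = (jn : ℤ) := ⟨j.toNat, by omega⟩
    have hjn : jn ≤ L := by exact_mod_cast hhi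
    rw [show ((jn:ℤ)^2 + a*jn) = ((jn^2 + a*jn : ℕ) : ℤ) by push_cast; ring, zpow_natCast,
      hcast L]
    rw [Finset.sum_congr rfl (fun r _ => by rw [hcast r])]
    exact perJ a L jn hjn
  · set jn : ℕ := (-j - a).toNat with hjndef
    have hjn : (jn : ℤ) = -j - a := by omega
    have hjnL : jn ≤ L := by omega
    have hsym : ∀ r : ℕ, qBinom Xq (2*(r:ℤ)+a) ((r:ℤ) - j) = qBinom Xq ((2*r+a : ℕ):ℤ) ((r:ℤ) - jn) := by
      intro r
      rw [qBinom_symm, show (2*(r:ℤ)+a) - ((r:ℤ) - j) = (r:ℤ) - jn by omega, hcast r]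
    rw [Finset.sum_congr rfl (fun r _ => by rw [hsym r])]
    rw [perJ a L jn hjnL]
    rw [qBinom_symm (2*(L:ℤ)+a) ((L:ℤ) - j),
      show (2*(L:ℤ)+a) - ((L:ℤ) - j) = (L:ℤ) - jn by omega, hcast L]
    congr 1
    rw [show ((j:ℤ)^2 + a*j) = ((jn^2 + a*jn : ℕ) : ℤ) by push_cast; rw [hjn]; ring, zpow_natCast]

/-- Special case of Bailey's lemma: for `a ∈ {0,1}` and any family `α_j` of rational
functions of `q`, with `F_a(L,q) = ∑_j α_j(q) [2L+a choose L-j]_q` (a finite sum, here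
taken over `-(L+a) ≤ j ≤ L`, which covers all nonzero terms), one has
`∑_{r=0}^{L} q^{r²+ar} (q;q)_{2L+a} / ((q;q)_{L-r} (q;q)_{2r+a}) · F_a(r,q)
  = ∑_j α_j(q) q^{j²+aj} [2L+a choose L-j]_q`. -/
theorem statement4 (α : ℤ → RatFunc ℚ) (a : ℕ) (ha : a ≤ 1) (L : ℕ) :
    ∑ r ∈ Finset.range (L + 1),
      Xq ^ (r ^ 2 + a * r) * qPoch Xq Xq (2 * L + a) *
        (qPoch Xq Xq (L - r) * qPoch Xq Xq (2 * r + a))⁻¹ *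
        (∑ j ∈ Finset.Icc (-(r : ℤ) - a) (r : ℤ),
          α j * qBinom Xq (2 * r + a) ((r : ℤ) - j)) =
    ∑ j ∈ Finset.Icc (-(L : ℤ) - a) (L : ℤ),
      α j * Xq ^ (j ^ 2 + a * j) * qBinom Xq (2 * L + a) ((L : ℤ) - j) := by
  have step1 : ∀ r ∈ range (L+1),
      (∑ j ∈ Finset.Icc (-(r : ℤ) - a) (r : ℤ), α j * qBinom Xq (2 * r + a) ((r : ℤ) - j))
      = ∑ j ∈ Finset.Icc (-(L : ℤ) - a) (L : ℤ), α j * qBinom Xq (2 * r + a) ((r : ℤ) - j) := by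
    intro r hr
    simp only [mem_range] at hr
    apply Finset.sum_subset
    · intro j hj
      simp only [mem_Icc] at *
      omega
    · intro j hj hj2
      simp only [mem_Icc] at *
      rw [qBinom_neg (by omega), mul_zero]
  calc ∑ r ∈ Finset.range (L + 1),
      Xq ^ (r ^ 2 + a * r) * qPoch Xq Xq (2 * L + a) *
        (qPoch Xq Xq (L - r) * qPoch Xq Xq (2 * r + a))⁻¹ *
        (∑ j ∈ Finset.Icc (-(r : ℤ) - a) (r : ℤ),
          α j * qBinom Xq (2 * r + a) ((r : ℤ) - j))
      = ∑ r ∈ Finset.range (L + 1), ∑ j ∈ Finset.Icc (-(L : ℤ) - a) (L : ℤ),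
          α j * (Xq ^ (r ^ 2 + a * r) * qPoch Xq Xq (2 * L + a) *
            (qPoch Xq Xq (L - r) * qPoch Xq Xq (2 * r + a))⁻¹ *
            qBinom Xq (2 * r + a) ((r : ℤ) - j)) := by
        apply Finset.sum_congr rfl
        intro r hr
        rw [step1 r hr, Finset.mul_sum]
        apply Finset.sum_congr rfl
        intro j _
        ring
    _ = ∑ j ∈ Finset.Icc (-(L : ℤ) - a) (L : ℤ), ∑ r ∈ Finset.range (L + 1),
          α j * (Xq ^ (r ^ 2 + a * r) * qPoch Xq Xq (2 * L + a) *
            (qPoch Xq Xq (L - r) * qPoch Xq Xq (2 * r + a))⁻¹ *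
            qBinom Xq (2 * r + a) ((r : ℤ) - j)) := Finset.sum_comm
    _ = ∑ j ∈ Finset.Icc (-(L : ℤ) - a) (L : ℤ),
          α j * Xq ^ (j ^ 2 + a * j) * qBinom Xq (2 * L + a) ((L : ℤ) - j) := by
        apply Finset.sum_congr rfl
        intro j hj
        simp only [mem_Icc] at hj
        rw [← Finset.mul_sum, perJZ a L ha j hj.1 hj.2]
        ring
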